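/- Let a ∈ Δ_n^*, b ∈ Δ_m^*, C ∈ ℝ^{n×m}, ε ≥ 0 and r ≥ 2. Then LOT_{r,ε} ≤ LOT_{r−1,ε}. -/

import Mathlib

open Matrix Finset Real
open scoped RealInnerProductSpace

noncomputable section

/-- Real matrices indexed by `Fin n × Fin m`. -/
abbrev Mat (n m : ℕ) : Type := Matrix (Fin n) (Fin m) ℝ

/-- Triples `(Q, R, g)` as in the low-rank OT factorization. -/
abbrev LRTriple (n m r : ℕ) : Type := Mat n r × Mat m r × (Fin r → ℝ)

/-- Pairs `(Q, R)` (fixed middle marginal `g`). -/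
abbrev LRPair (n m r : ℕ) : Type := Mat n r × Mat m r

/-- The interior of the probability simplex Δ_n^*: strictly positive entries summing to 1. -/
def posSimplex (n : ℕ) : Set (Fin n → ℝ) := {a | (∀ i, 0 < a i) ∧ ∑ i, a i = 1}

/-- Frobenius inner product ⟨C, P⟩ = Σ_{ij} C_ij P_ij. -/
def frobInner {n m : ℕ} (C P : Mat n m) : ℝ := ∑ i, ∑ j, C i j * P i j

/-- Entropy H(P) = −Σ_{ij} P_ij (log P_ij − 1) (with 0 log 0 = 0, as `Real.log 0 = 0`). -/
def matH {n m : ℕ} (P : Mat n m) : ℝ := -∑ i, ∑ j, P i j * (Real.log (P i j) - 1)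

/-- Entropy of a vector. -/
def vecH {r : ℕ} (g : Fin r → ℝ) : ℝ := -∑ i, g i * (Real.log (g i) - 1)

/-- Kullback–Leibler divergence KL(P,Q) = Σ_{ij} P_ij (log(P_ij/Q_ij) − 1). -/
def matKL {n m : ℕ} (P Q : Mat n m) : ℝ := ∑ i, ∑ j, P i j * (Real.log (P i j / Q i j) - 1)

/-- Kullback–Leibler divergence of vectors. -/
def vecKL {r : ℕ} (p q : Fin r → ℝ) : ℝ := ∑ i, p i * (Real.log (p i / q i) - 1)

/-- KL divergence on triples, summing over the three components. -/
def tripleKL {n m r : ℕ} (x y : LRTriple n m r) : ℝ :=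
  matKL x.1 y.1 + matKL x.2.1 y.2.1 + vecKL x.2.2 y.2.2

/-- KL divergence on pairs, summing over the two components. -/
def pairKL {n m r : ℕ} (x y : LRPair n m r) : ℝ := matKL x.1 y.1 + matKL x.2 y.2

/-- Euclidean inner product on triples. -/
def tripleInner {n m r : ℕ} (x y : LRTriple n m r) : ℝ :=
  frobInner x.1 y.1 + frobInner x.2.1 y.2.1 + ∑ i, x.2.2 i * y.2.2 i

/-- Euclidean inner product on pairs. -/
def pairInner {n m r : ℕ} (x y : LRPair n m r) : ℝ := frobInner x.1 y.1 + frobInner x.2 y.2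

/-- Squared Euclidean norm of a triple (Frobenius on matrix blocks). -/
def tripleNormSq {n m r : ℕ} (x : LRTriple n m r) : ℝ :=
  (∑ i, ∑ j, (x.1 i j) ^ 2) + (∑ i, ∑ j, (x.2.1 i j) ^ 2) + ∑ i, (x.2.2 i) ^ 2

/-- Squared Euclidean norm of a pair (Frobenius on matrix blocks). -/
def pairNormSq {n m r : ℕ} (x : LRPair n m r) : ℝ :=
  (∑ i, ∑ j, (x.1 i j) ^ 2) + (∑ i, ∑ j, (x.2 i j) ^ 2)

/-- The transport polytope Π_{a,b} of couplings with marginals `a` and `b`. -/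
def couplings {n m : ℕ} (a : Fin n → ℝ) (b : Fin m → ℝ) : Set (Mat n m) :=
  {P | (∀ i j, 0 ≤ P i j) ∧ (∀ i, ∑ j, P i j = a i) ∧ (∀ j, ∑ i, P i j = b j)}

/-- The nonnegative rank: smallest `q` such that `M` is a sum of `q` nonnegative
rank-one matrices. -/
def nonnegRank {n m : ℕ} (M : Mat n m) : ℕ :=
  sInf {q : ℕ | ∃ f : Fin q → Mat n m,
    (∀ i, (f i).rank = 1 ∧ ∀ k l, 0 ≤ f i k l) ∧ M = ∑ i, f i}

/-- Π_{a,b}(r): couplings with nonnegative rank at most `r`. -/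
def couplingsRank {n m : ℕ} (a : Fin n → ℝ) (b : Fin m → ℝ) (r : ℕ) : Set (Mat n m) :=
  {P | P ∈ couplings a b ∧ nonnegRank P ≤ r}

/-- 𝒞₁(a,b,r): `Q, R` nonnegative with row sums `a`, `b`, and `g > 0`. -/
def C1set {n m : ℕ} (a : Fin n → ℝ) (b : Fin m → ℝ) (r : ℕ) : Set (LRTriple n m r) :=
  {x | (∀ i j, 0 ≤ x.1 i j) ∧ (∀ i j, 0 ≤ x.2.1 i j) ∧ (∀ i, 0 < x.2.2 i) ∧
    (∀ i, ∑ j, x.1 i j = a i) ∧ (∀ i, ∑ j, x.2.1 i j = b i)}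

/-- The closure of 𝒞₁(a,b,r): as 𝒞₁ but only `g ≥ 0`. -/
def C1barSet {n m : ℕ} (a : Fin n → ℝ) (b : Fin m → ℝ) (r : ℕ) : Set (LRTriple n m r) :=
  {x | (∀ i j, 0 ≤ x.1 i j) ∧ (∀ i j, 0 ≤ x.2.1 i j) ∧ (∀ i, 0 ≤ x.2.2 i) ∧
    (∀ i, ∑ j, x.1 i j = a i) ∧ (∀ i, ∑ j, x.2.1 i j = b i)}

/-- 𝒞₁(a,b,r,α): as 𝒞₁ but with the lower bound `g ≥ α`. -/
def C1setAlpha {n m : ℕ} (a : Fin n → ℝ) (b : Fin m → ℝ) (r : ℕ) (α : ℝ) :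
    Set (LRTriple n m r) :=
  {x | (∀ i j, 0 ≤ x.1 i j) ∧ (∀ i j, 0 ≤ x.2.1 i j) ∧ (∀ i, α ≤ x.2.2 i) ∧
    (∀ i, ∑ j, x.1 i j = a i) ∧ (∀ i, ∑ j, x.2.1 i j = b i)}

/-- 𝒞₂(r): `Q, R, g` nonnegative with both column sums equal to `g`. -/
def C2set {n m : ℕ} (r : ℕ) : Set (LRTriple n m r) :=
  {x | (∀ i j, 0 ≤ x.1 i j) ∧ (∀ i j, 0 ≤ x.2.1 i j) ∧ (∀ i, 0 ≤ x.2.2 i) ∧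
    (∀ j, ∑ i, x.1 i j = x.2.2 j) ∧ (∀ j, ∑ i, x.2.1 i j = x.2.2 j)}

/-- 𝒞(a,b,r) = 𝒞₁(a,b,r) ∩ 𝒞₂(r). -/
def Cset {n m : ℕ} (a : Fin n → ℝ) (b : Fin m → ℝ) (r : ℕ) : Set (LRTriple n m r) :=
  C1set a b r ∩ C2set r

/-- 𝒞(a,b,r,α) = 𝒞₁(a,b,r,α) ∩ 𝒞₂(r). -/
def CsetAlpha {n m : ℕ} (a : Fin n → ℝ) (b : Fin m → ℝ) (r : ℕ) (α : ℝ) :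
    Set (LRTriple n m r) :=
  C1setAlpha a b r α ∩ C2set r

/-- F_ε(Q,R,g) = ⟨C, Q Diag(1/g) Rᵀ⟩ − ε H((Q,R,g)). -/
def Fobj {n m r : ℕ} (C : Mat n m) (ε : ℝ) (x : LRTriple n m r) : ℝ :=
  frobInner C (x.1 * Matrix.diagonal (fun i => (x.2.2 i)⁻¹) * x.2.1ᵀ) -
    ε * (matH x.1 + matH x.2.1 + vecH x.2.2)

/-- LOT_{r,ε} = inf of F_ε over 𝒞(a,b,r). -/
def LOTre {n m : ℕ} (a : Fin n → ℝ) (b : Fin m → ℝ) (C : Mat n m) (ε : ℝ) (r : ℕ) : ℝ :=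
  sInf (Fobj C ε '' Cset a b r)

/-- LOT_{r,ε,α} = inf of F_ε over 𝒞(a,b,r,α). -/
def LOTreAlpha {n m : ℕ} (a : Fin n → ℝ) (b : Fin m → ℝ) (C : Mat n m) (ε : ℝ) (r : ℕ)
    (α : ℝ) : ℝ :=
  sInf (Fobj C ε '' CsetAlpha a b r α)

/-- Spectral norm (ℓ²→ℓ² operator norm) of a matrix. -/
def specNorm {n m : ℕ} (C : Mat n m) : ℝ :=
  ‖LinearMap.toContinuousLinearMap (Matrix.toEuclideanLin C)‖

/-- The gradient ∇F_ε(Q,R,g) =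
(C R Diag(1/g) + ε log Q, Cᵀ Q Diag(1/g) + ε log R, −𝒟(Qᵀ C R)/g² + ε log g). -/
def gradF {n m r : ℕ} (C : Mat n m) (ε : ℝ) (x : LRTriple n m r) : LRTriple n m r :=
  (Matrix.of fun i k => (C * x.2.1) i k * (x.2.2 k)⁻¹ + ε * Real.log (x.1 i k),
   Matrix.of fun j k => (Cᵀ * x.1) j k * (x.2.2 k)⁻¹ + ε * Real.log (x.2.1 j k),
   fun k => -((x.1ᵀ * C * x.2.1) k k) / (x.2.2 k) ^ 2 + ε * Real.log (x.2.2 k))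

/-- Entrywise logarithm of a triple. -/
def logTriple {n m r : ℕ} (x : LRTriple n m r) : LRTriple n m r :=
  (Matrix.of fun i k => Real.log (x.1 i k), Matrix.of fun j k => Real.log (x.2.1 j k),
   fun k => Real.log (x.2.2 k))

/-- The feasible set Π_{a,g} × Π_{b,g}. -/
def pairFeasible {n m r : ℕ} (a : Fin n → ℝ) (b : Fin m → ℝ) (g : Fin r → ℝ) :
    Set (LRPair n m r) :=
  {u | u.1 ∈ couplings a g ∧ u.2 ∈ couplings b g}

/-- f_ε(Q,R) = ⟨C, Q Diag(1/g) Rᵀ⟩ − ε (H(Q) + H(R)) for fixed `g`. -/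
def fobj {n m r : ℕ} (C : Mat n m) (g : Fin r → ℝ) (ε : ℝ) (x : LRPair n m r) : ℝ :=
  frobInner C (x.1 * Matrix.diagonal (fun i => (g i)⁻¹) * x.2ᵀ) - ε * (matH x.1 + matH x.2)

/-- LOT_{r,g,ε} = inf of f_ε over Π_{a,g} × Π_{b,g}. -/
def LOTfix {n m r : ℕ} (a : Fin n → ℝ) (b : Fin m → ℝ) (g : Fin r → ℝ) (C : Mat n m)
    (ε : ℝ) : ℝ :=
  sInf (fobj C g ε '' pairFeasible a b g)

/-- The gradient ∇f_ε(Q,R) = (C R Diag(1/g) + ε log Q, Cᵀ Q Diag(1/g) + ε log R). -/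
def gradf {n m r : ℕ} (C : Mat n m) (g : Fin r → ℝ) (ε : ℝ) (x : LRPair n m r) :
    LRPair n m r :=
  (Matrix.of fun i k => (C * x.2) i k * (g k)⁻¹ + ε * Real.log (x.1 i k),
   Matrix.of fun j k => (Cᵀ * x.1) j k * (g k)⁻¹ + ε * Real.log (x.2 j k))

/-- Entrywise logarithm of a pair. -/
def logPair {n m r : ℕ} (x : LRPair n m r) : LRPair n m r :=
  (Matrix.of fun i k => Real.log (x.1 i k), Matrix.of fun j k => Real.log (x.2 j k))

end

noncomputable section AuxSplit

/-- Map `Fin (s+1) → Fin s` sending the last index to `0`. -/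
def tauSplit (s : ℕ) [NeZero s] : Fin (s + 1) → Fin s := Fin.snoc (fun k => k) 0

/-- Weights: `1/2` on index `0` and on the last index, `1` elsewhere. -/
def wtSplit (s : ℕ) [NeZero s] : Fin (s + 1) → ℝ :=
  Fin.snoc (fun k : Fin s => if k = 0 then (1 : ℝ) / 2 else 1) (1 / 2)

lemma wtSplit_pos (s : ℕ) [NeZero s] (k : Fin (s + 1)) : 0 < wtSplit s k := by
  induction k using Fin.lastCases with
  | last => simp [wtSplit]
  | cast k =>
    simp only [wtSplit, Fin.snoc_castSucc]
    split <;> norm_num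

lemma sum_wtSplit (s : ℕ) [NeZero s] (f : Fin s → ℝ) :
    ∑ k : Fin (s + 1), wtSplit s k * f (tauSplit s k) = ∑ k, f k := by
  rw [Fin.sum_univ_castSucc]
  simp only [tauSplit, wtSplit, Fin.snoc_castSucc, Fin.snoc_last]
  have h : ∀ k : Fin s, (if k = 0 then (1 : ℝ) / 2 else 1) * f k
      = f k - (if k = 0 then (1 / 2) * f k else 0) := by
    intro k; split <;> ring
  rw [Finset.sum_congr rfl fun k _ => h k, Finset.sum_sub_distrib,
    Finset.sum_ite_eq' Finset.univ (0 : Fin s) (fun k => (1 / 2) * f k)]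
  simp only [Finset.mem_univ, if_true]
  ring

lemma ent_wtSplit (s : ℕ) [NeZero s] (f : Fin s → ℝ) (hf : 0 ≤ f 0) :
    ∑ k : Fin (s + 1),
        (wtSplit s k * f (tauSplit s k)) * (Real.log (wtSplit s k * f (tauSplit s k)) - 1)
      ≤ ∑ k, f k * (Real.log (f k) - 1) := by
  rw [Fin.sum_univ_castSucc]
  simp only [tauSplit, wtSplit, Fin.snoc_castSucc, Fin.snoc_last]
  have h2 : 2 * ((1 / 2 * f 0) * (Real.log (1 / 2 * f 0) - 1)) - f 0 * (Real.log (f 0) - 1)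
      ≤ 0 := by
    rcases eq_or_lt_of_le hf with h | h
    · simp [← h]
    · have hlog : Real.log (1 / 2 * f 0) = Real.log (f 0) - Real.log 2 := by
        rw [show (1 / 2 : ℝ) * f 0 = f 0 / 2 by ring, Real.log_div h.ne' two_ne_zero]
      rw [hlog]
      have hlog2 : 0 < Real.log 2 := Real.log_pos (by norm_num)
      nlinarith
  have key : ∀ k : Fin s,
      ((if k = 0 then (1 : ℝ) / 2 else 1) * f k) *
          (Real.log ((if k = 0 then (1 : ℝ) / 2 else 1) * f k) - 1)
        = f k * (Real.log (f k) - 1) +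
          (if k = 0 then ((1 / 2 * f 0) * (Real.log (1 / 2 * f 0) - 1)
            - f 0 * (Real.log (f 0) - 1)) else 0) := by
    intro k
    by_cases hk : k = 0
    · subst hk; norm_num
    · simp [hk]
  rw [Finset.sum_congr rfl fun k _ => key k, Finset.sum_add_distrib,
    Finset.sum_ite_eq' Finset.univ (0 : Fin s)]
  simp only [Finset.mem_univ, if_true]
  linarith

lemma ent_entry_lb (t : ℝ) (h0 : 0 ≤ t) (h1 : t ≤ 1) : -2 ≤ t * (Real.log t - 1) := by
  rcases eq_or_lt_of_le h0 with h | h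
  · simp [← h]
  · have h2 : Real.log t⁻¹ ≤ t⁻¹ - 1 := Real.log_le_sub_one_of_pos (by positivity)
    rw [Real.log_inv] at h2
    have ht : 1 - t⁻¹ ≤ Real.log t := by linarith
    have h3 : t * (1 - t⁻¹) ≤ t * Real.log t := mul_le_mul_of_nonneg_left ht h0
    have h4 : t * t⁻¹ = 1 := mul_inv_cancel₀ h.ne'
    nlinarith

lemma matH_le_of_bdd {n r : ℕ} (P : Mat n r) (h0 : ∀ i k, 0 ≤ P i k)
    (h1 : ∀ i k, P i k ≤ 1) : matH P ≤ 2 * (n * r) := by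
  unfold matH
  have h : (-(2 * ((n : ℝ) * r))) ≤ ∑ i, ∑ k, P i k * (Real.log (P i k) - 1) := by
    calc (-(2 * ((n : ℝ) * r))) = ∑ _i : Fin n, ∑ _k : Fin r, (-2 : ℝ) := by
          simp [Finset.sum_const, Finset.card_univ]; ring
      _ ≤ _ := Finset.sum_le_sum fun i _ =>
          Finset.sum_le_sum fun k _ => ent_entry_lb _ (h0 i k) (h1 i k)
  linarith

lemma vecH_le_of_bdd {r : ℕ} (g : Fin r → ℝ) (h0 : ∀ k, 0 ≤ g k)
    (h1 : ∀ k, g k ≤ 1) : vecH g ≤ 2 * r := by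
  unfold vecH
  have h : (-(2 * (r : ℝ))) ≤ ∑ k, g k * (Real.log (g k) - 1) := by
    calc (-(2 * (r : ℝ))) = ∑ _k : Fin r, (-2 : ℝ) := by
          simp [Finset.sum_const, Finset.card_univ]; ring
      _ ≤ _ := Finset.sum_le_sum fun k _ => ent_entry_lb _ (h0 k) (h1 k)
  linarith

lemma prodEntry {n m r : ℕ} (Q : Mat n r) (R : Mat m r) (d : Fin r → ℝ) (i : Fin n)
    (j : Fin m) : (Q * Matrix.diagonal d * Rᵀ) i j = ∑ k, Q i k * d k * R j k := by
  rw [Matrix.mul_apply]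
  refine Finset.sum_congr rfl fun k _ => ?_
  rw [Matrix.mul_diagonal, Matrix.transpose_apply]

lemma fobj_lb {n m r : ℕ} {a : Fin n → ℝ} {b : Fin m → ℝ}
    (ha : a ∈ posSimplex n) (hb : b ∈ posSimplex m)
    (C : Mat n m) {ε : ℝ} (hε : 0 ≤ ε) {x : LRTriple n m r} (hx : x ∈ Cset a b r) :
    -(∑ i, ∑ j, |C i j|) - ε * (2 * (n * r) + 2 * (m * r) + 2 * r) ≤ Fobj C ε x := by
  obtain ⟨Q, R, g⟩ := x
  obtain ⟨⟨hQ0, hR0, hgpos, hQrow, hRrow⟩, _, _, _, hQcol, hRcol⟩ := hx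
  dsimp only at hQ0 hR0 hgpos hQrow hRrow hQcol hRcol
  have hg1 : ∑ k, g k = 1 := by
    have h1 : ∑ k, g k = ∑ k, ∑ i, Q i k :=
      Finset.sum_congr rfl fun k _ => (hQcol k).symm
    rw [h1, Finset.sum_comm]
    have h2 : ∀ i : Fin n, ∑ k, Q i k = a i := hQrow
    simp_rw [h2]
    exact ha.2
  have hgle1 : ∀ k, g k ≤ 1 := by
    intro k
    rw [← hg1]
    exact Finset.single_le_sum (fun k _ => (hgpos k).le) (Finset.mem_univ k)
  have hQleg : ∀ i k, Q i k ≤ g k := by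
    intro i k
    rw [← hQcol k]
    exact Finset.single_le_sum (fun i _ => hQ0 i k) (Finset.mem_univ i)
  have hRleg : ∀ j k, R j k ≤ g k := by
    intro j k
    rw [← hRcol k]
    exact Finset.single_le_sum (fun j _ => hR0 j k) (Finset.mem_univ j)
  have hble1 : ∀ j, b j ≤ 1 := by
    intro j
    rw [← hb.2]
    exact Finset.single_le_sum (fun j _ => (hb.1 j).le) (Finset.mem_univ j)
  -- bounds on the matrix entries of the product
  have hM0 : ∀ i j, 0 ≤ (Q * Matrix.diagonal (fun k => (g k)⁻¹) * Rᵀ) i j := by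
    intro i j
    rw [prodEntry]
    exact Finset.sum_nonneg fun k _ =>
      mul_nonneg (mul_nonneg (hQ0 i k) (inv_nonneg.2 (hgpos k).le)) (hR0 j k)
  have hM1 : ∀ i j, (Q * Matrix.diagonal (fun k => (g k)⁻¹) * Rᵀ) i j ≤ 1 := by
    intro i j
    rw [prodEntry]
    calc ∑ k, Q i k * (g k)⁻¹ * R j k ≤ ∑ k, R j k := by
          refine Finset.sum_le_sum fun k _ => ?_
          have h1 : Q i k * (g k)⁻¹ ≤ 1 := by
            rw [← div_eq_mul_inv, div_le_one (hgpos k)]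
            exact hQleg i k
          nlinarith [hR0 j k, mul_nonneg (hQ0 i k) (inv_nonneg.2 (hgpos k).le)]
      _ = b j := hRrow j
      _ ≤ 1 := hble1 j
  have hfrob : -(∑ i, ∑ j, |C i j|)
      ≤ frobInner C (Q * Matrix.diagonal (fun k => (g k)⁻¹) * Rᵀ) := by
    unfold frobInner
    rw [← Finset.sum_neg_distrib]
    refine Finset.sum_le_sum fun i _ => ?_
    rw [← Finset.sum_neg_distrib]
    refine Finset.sum_le_sum fun j _ => ?_
    nlinarith [abs_nonneg (C i j), neg_abs_le (C i j), le_abs_self (C i j),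
      hM0 i j, hM1 i j]
  have hHQ : matH Q ≤ 2 * (n * r) :=
    matH_le_of_bdd Q hQ0 (fun i k => le_trans (hQleg i k) (hgle1 k))
  have hHR : matH R ≤ 2 * (m * r) :=
    matH_le_of_bdd R hR0 (fun j k => le_trans (hRleg j k) (hgle1 k))
  have hHg : vecH g ≤ 2 * r :=
    vecH_le_of_bdd g (fun k => (hgpos k).le) hgle1
  have hmul : ε * (matH Q + matH R + vecH g)
      ≤ ε * (2 * (n * r) + 2 * (m * r) + 2 * r) :=
    mul_le_mul_of_nonneg_left (by linarith) hε
  unfold Fobj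
  dsimp only
  linarith

lemma cset_nonempty {n m : ℕ} {a : Fin n → ℝ} {b : Fin m → ℝ}
    (ha : a ∈ posSimplex n) (hb : b ∈ posSimplex m) (r : ℕ) (hr : 0 < r) :
    (Cset a b r).Nonempty := by
  have hr0 : (0 : ℝ) < r := by exact_mod_cast hr
  refine ⟨(Matrix.of fun i (_ : Fin r) => a i * (r : ℝ)⁻¹,
    Matrix.of fun j (_ : Fin r) => b j * (r : ℝ)⁻¹, fun _ => (r : ℝ)⁻¹), ?_, ?_⟩
  · refine ⟨fun i k => mul_nonneg (ha.1 i).le (by positivity),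
      fun j k => mul_nonneg (hb.1 j).le (by positivity),
      fun k => by positivity, fun i => ?_, fun j => ?_⟩
    · simp only [Matrix.of_apply, Finset.sum_const, Finset.card_univ, Fintype.card_fin,
        nsmul_eq_mul]
      field_simp
    · simp only [Matrix.of_apply, Finset.sum_const, Finset.card_univ, Fintype.card_fin,
        nsmul_eq_mul]
      field_simp
  · refine ⟨fun i k => mul_nonneg (ha.1 i).le (by positivity),
      fun j k => mul_nonneg (hb.1 j).le (by positivity),
      fun k => by positivity, fun k => ?_, fun k => ?_⟩
    · simp only [Matrix.of_apply, ← Finset.sum_mul, ha.2, one_mul]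
    · simp only [Matrix.of_apply, ← Finset.sum_mul, hb.2, one_mul]

end AuxSplit

/-- For `ε ≥ 0` and `r ≥ 2`, `LOT_{r,ε} ≤ LOT_{r−1,ε}`. -/
theorem LOTre_antitone {n m : ℕ}
    (a : Fin n → ℝ) (ha : a ∈ posSimplex n)
    (b : Fin m → ℝ) (hb : b ∈ posSimplex m)
    (C : Mat n m) (ε : ℝ) (hε : 0 ≤ ε) (r : ℕ) (hr : 2 ≤ r) :
    LOTre a b C ε r ≤ LOTre a b C ε (r - 1) := by
  obtain ⟨s, rfl⟩ : ∃ s, r = s + 1 := ⟨r - 1, by omega⟩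
  haveI : NeZero s := ⟨by omega⟩
  have hrw : s + 1 - 1 = s := rfl
  rw [hrw]
  have hbdd : BddBelow (Fobj C ε '' Cset a b (s + 1)) := by
    refine ⟨-(∑ i, ∑ j, |C i j|) - ε * (2 * (n * (s+1)) + 2 * (m * (s+1)) + 2 * (s+1)),
      fun y hy => ?_⟩
    obtain ⟨x, hx, rfl⟩ := hy
    have h := fobj_lb ha hb C hε hx
    push_cast at h ⊢
    linarith
  have hne : (Cset a b s).Nonempty := cset_nonempty ha hb s (by omega)
  rw [LOTre, LOTre]
  refine le_csInf (hne.image _) ?_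
  rintro y ⟨⟨Q, R, g⟩, hx, rfl⟩
  obtain ⟨⟨hQ0, hR0, hgpos, hQrow, hRrow⟩, _, _, _, hQcol, hRcol⟩ := hx
  dsimp only at hQ0 hR0 hgpos hQrow hRrow hQcol hRcol
  set Q' : Mat n (s + 1) := Matrix.of fun i k => wtSplit s k * Q i (tauSplit s k) with hQ'
  set R' : Mat m (s + 1) := Matrix.of fun j k => wtSplit s k * R j (tauSplit s k) with hR'
  set g' : Fin (s + 1) → ℝ := fun k => wtSplit s k * g (tauSplit s k) with hg'
  have hx'mem : (Q', R', g') ∈ Cset a b (s + 1) := by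
    constructor
    · refine ⟨fun i k => mul_nonneg (wtSplit_pos s k).le (hQ0 _ _),
        fun j k => mul_nonneg (wtSplit_pos s k).le (hR0 _ _),
        fun k => mul_pos (wtSplit_pos s k) (hgpos _), fun i => ?_, fun j => ?_⟩
      · exact (sum_wtSplit s (fun k => Q i k)).trans (hQrow i)
      · exact (sum_wtSplit s (fun k => R j k)).trans (hRrow j)
    · refine ⟨fun i k => mul_nonneg (wtSplit_pos s k).le (hQ0 _ _),
        fun j k => mul_nonneg (wtSplit_pos s k).le (hR0 _ _),
        fun k => (mul_pos (wtSplit_pos s k) (hgpos _)).le, fun k => ?_, fun k => ?_⟩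
      · show ∑ i, wtSplit s k * Q i (tauSplit s k) = g' k
        rw [← Finset.mul_sum, hQcol]
      · show ∑ j, wtSplit s k * R j (tauSplit s k) = g' k
        rw [← Finset.mul_sum, hRcol]
  refine le_trans (csInf_le hbdd ⟨(Q', R', g'), hx'mem, rfl⟩) ?_
  -- compare objective values
  have hfrobeq : frobInner C (Q' * Matrix.diagonal (fun k => (g' k)⁻¹) * R'ᵀ)
      = frobInner C (Q * Matrix.diagonal (fun k => (g k)⁻¹) * Rᵀ) := by
    unfold frobInner
    refine Finset.sum_congr rfl fun i _ => Finset.sum_congr rfl fun j _ => ?_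
    congr 1
    rw [prodEntry, prodEntry, ← sum_wtSplit s (fun k => Q i k * (g k)⁻¹ * R j k)]
    refine Finset.sum_congr rfl fun k _ => ?_
    have hw : wtSplit s k ≠ 0 := (wtSplit_pos s k).ne'
    have hg0 : g (tauSplit s k) ≠ 0 := (hgpos _).ne'
    show (wtSplit s k * Q i (tauSplit s k)) * (wtSplit s k * g (tauSplit s k))⁻¹ *
        (wtSplit s k * R j (tauSplit s k))
      = wtSplit s k * (Q i (tauSplit s k) * (g (tauSplit s k))⁻¹ * R j (tauSplit s k))
    field_simp
  have hHQ : ∑ i, ∑ k, Q' i k * (Real.log (Q' i k) - 1)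
      ≤ ∑ i, ∑ k, Q i k * (Real.log (Q i k) - 1) :=
    Finset.sum_le_sum fun i _ => ent_wtSplit s (fun k => Q i k) (hQ0 i 0)
  have hHR : ∑ j, ∑ k, R' j k * (Real.log (R' j k) - 1)
      ≤ ∑ j, ∑ k, R j k * (Real.log (R j k) - 1) :=
    Finset.sum_le_sum fun j _ => ent_wtSplit s (fun k => R j k) (hR0 j 0)
  have hHg : ∑ k, g' k * (Real.log (g' k) - 1)
      ≤ ∑ k, g k * (Real.log (g k) - 1) :=
    ent_wtSplit s g (hgpos 0).le
  have hmul : ε * (matH Q + matH R + vecH g)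
      ≤ ε * (matH Q' + matH R' + vecH g') := by
    refine mul_le_mul_of_nonneg_left ?_ hε
    unfold matH vecH
    linarith
  unfold Fobj
  dsimp only
  rw [hfrobeq]
  linarith
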